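/- arXiv:1702.03355 — 2 statements merged into one kernel-verified Lean document; each statement's English description precedes it below -/
import Mathlib

section
/- Let S = sgp^+⟨A|R⟩ be a semigroup presented by a finite alphabet A and relations R, let L ⊆ A^+, and suppose (A, L) is a prefix-automatic structure for S. Let e be a new symbol not in A, B = A ∪ {e}, K = L ∪ {e}, and let S^1 be the monoid obtained from S by adjoining an identity element, with e mapped to the identity and each a ∈ A mapped to its image in S. Then (B, K) is a prefix-automatic structure for S^1. -/
/-!  Common definitions, following the conventions of the paper
"Automaticity of one-relator semigroups with length less than or equal to three".

Words over an alphabet `α` are modelled as `List α`; the empty word is `[]`.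
The padded alphabet `A(2,$)` is modelled inside `Option α × Option α`,
where `none` plays the role of the padding symbol `$` (the pair `(none, none)`
never occurs in a padded convolution). -/

/-- A regular set of words: one accepted by a DFA with finitely many states. -/
abbrev IsReg {α : Type*} (L : Set (List α)) : Prop :=
  Language.IsRegular (L : Language α)

/-- Right-padded convolution `(x,y)δᴿ`: align the two words letter by letter
from the left and pad the shorter one on the right with the padding symbol. -/
def padR {α : Type*} (x y : List α) : List (Option α × Option α) :=
  (x.map some ++ List.replicate (y.length - x.length) none).zip
    (y.map some ++ List.replicate (x.length - y.length) none)

/-- Left-padded convolution `(x,y)δᴸ`: align the two words letter by letter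
from the right and pad the shorter one on the left with the padding symbol. -/
def padL {α : Type*} (x y : List α) : List (Option α × Option α) :=
  (List.replicate (y.length - x.length) none ++ x.map some).zip
    (List.replicate (x.length - y.length) none ++ y.map some)

/-- One elementary rewriting step: replace a factor `u` by `v`
for some defining relation `(u, v) ∈ R` (in either direction via `Relation.EqvGen`). -/
def OneStep {α : Type*} (R : Set (List α × List α)) (x y : List α) : Prop :=
  ∃ p u v s, (u, v) ∈ R ∧ x = p ++ u ++ s ∧ y = p ++ v ++ s

/-- Equality of two words in the semigroup `sgp⁺⟨α ∣ R⟩` (resp. the monoid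
`sgp⟨α ∣ R⟩`): the congruence on words generated by the relations `R`. -/
def WordEq {α : Type*} (R : Set (List α × List α)) : List α → List α → Prop :=
  Relation.EqvGen (OneStep R)

/-- Expansion of a word over an abstract generating set `β` into a word over the
presentation alphabet `α`, where `g b` is a word representing the generator `b`. -/
def expandW {α β : Type*} (g : β → List α) (w : List β) : List α :=
  (w.map g).flatten

/-- `(g, L)` is an automatic structure for the semigroup `sgp⁺⟨α ∣ R⟩` with
respect to the finite generating set indexed by `β`:  each generator `b` is the
element of the semigroup represented by the nonempty word `g b`, the language
`L ⊆ β⁺` is regular and maps onto the semigroup, and `L_ε^$` together with all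
`L_b^$` (right multiplication, right padding) are regular. -/
structure SgpAutoStruct {α β : Type*} (R : Set (List α × List α))
    (g : β → List α) (L : Set (List β)) : Prop where
  gen_ne : ∀ b, g b ≠ []
  reg : IsReg L
  ne : ∀ w ∈ L, w ≠ []
  onto : ∀ w : List α, w ≠ [] → ∃ x ∈ L, WordEq R (expandW g x) w
  eq_reg : IsReg {p | ∃ x ∈ L, ∃ y ∈ L,
      WordEq R (expandW g x) (expandW g y) ∧ p = padR x y}
  mul_reg : ∀ b : β, IsReg {p | ∃ x ∈ L, ∃ y ∈ L,
      WordEq R (expandW g x ++ g b) (expandW g y) ∧ p = padR x y}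

/-- A prefix-automatic structure for `sgp⁺⟨α ∣ R⟩`: an automatic structure for
which moreover `L'_= = {(x,y)δᴿ : x ∈ L, y ∈ Pref(L), x = y in S}` is regular. -/
structure SgpPrefixAutoStruct {α β : Type*} (R : Set (List α × List α))
    (g : β → List α) (L : Set (List β)) extends SgpAutoStruct R g L : Prop where
  pre_reg : IsReg {p | ∃ x ∈ L, ∃ y : List β, (∃ z ∈ L, y <+: z) ∧
      WordEq R (expandW g x) (expandW g y) ∧ p = padR x y}

/-- A biautomatic structure for the semigroup `sgp⁺⟨α ∣ R⟩`: the languages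
`L_b^$`, `_bL^$`, `^$L_b` and `_b^$L` are regular for every `b ∈ β ∪ {ε}`. -/
structure SgpBiautoStruct {α β : Type*} (R : Set (List α × List α))
    (g : β → List α) (L : Set (List β)) : Prop where
  gen_ne : ∀ b, g b ≠ []
  reg : IsReg L
  ne : ∀ w ∈ L, w ≠ []
  onto : ∀ w : List α, w ≠ [] → ∃ x ∈ L, WordEq R (expandW g x) w
  eqR_reg : IsReg {p | ∃ x ∈ L, ∃ y ∈ L,
      WordEq R (expandW g x) (expandW g y) ∧ p = padR x y}
  eqL_reg : IsReg {p | ∃ x ∈ L, ∃ y ∈ L,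
      WordEq R (expandW g x) (expandW g y) ∧ p = padL x y}
  mulRR_reg : ∀ b : β, IsReg {p | ∃ x ∈ L, ∃ y ∈ L,
      WordEq R (expandW g x ++ g b) (expandW g y) ∧ p = padR x y}
  mulLR_reg : ∀ b : β, IsReg {p | ∃ x ∈ L, ∃ y ∈ L,
      WordEq R (g b ++ expandW g x) (expandW g y) ∧ p = padR x y}
  mulRL_reg : ∀ b : β, IsReg {p | ∃ x ∈ L, ∃ y ∈ L,
      WordEq R (expandW g x ++ g b) (expandW g y) ∧ p = padL x y}
  mulLL_reg : ∀ b : β, IsReg {p | ∃ x ∈ L, ∃ y ∈ L,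
      WordEq R (g b ++ expandW g x) (expandW g y) ∧ p = padL x y}

/-- The semigroup `sgp⁺⟨α ∣ R⟩` is automatic: it admits an automatic structure
over some finite generating set. -/
def SgpAutomatic {α : Type*} (R : Set (List α × List α)) : Prop :=
  ∃ (β : Type) (_ : Fintype β) (g : β → List α) (L : Set (List β)),
    SgpAutoStruct R g L

/-- The semigroup `sgp⁺⟨α ∣ R⟩` is prefix-automatic. -/
def SgpPrefixAutomatic {α : Type*} (R : Set (List α × List α)) : Prop :=
  ∃ (β : Type) (_ : Fintype β) (g : β → List α) (L : Set (List β)),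
    SgpPrefixAutoStruct R g L

/-- The semigroup `sgp⁺⟨α ∣ R⟩` is biautomatic. -/
def SgpBiautomatic {α : Type*} (R : Set (List α × List α)) : Prop :=
  ∃ (β : Type) (_ : Fintype β) (g : β → List α) (L : Set (List β)),
    SgpBiautoStruct R g L

/-- `(g, L)` is an automatic structure for the monoid `sgp⟨α ∣ R⟩` with respect
to a finite generating set indexed by `β`; generators may represent any element
of the monoid (in particular the identity, represented by the empty word). -/
structure MonAutoStruct {α β : Type*} (R : Set (List α × List α))
    (g : β → List α) (L : Set (List β)) : Prop where
  reg : IsReg L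
  ne : ∀ w ∈ L, w ≠ []
  onto : ∀ w : List α, ∃ x ∈ L, WordEq R (expandW g x) w
  eq_reg : IsReg {p | ∃ x ∈ L, ∃ y ∈ L,
      WordEq R (expandW g x) (expandW g y) ∧ p = padR x y}
  mul_reg : ∀ b : β, IsReg {p | ∃ x ∈ L, ∃ y ∈ L,
      WordEq R (expandW g x ++ g b) (expandW g y) ∧ p = padR x y}

/-- A prefix-automatic structure for the monoid `sgp⟨α ∣ R⟩`. -/
structure MonPrefixAutoStruct {α β : Type*} (R : Set (List α × List α))
    (g : β → List α) (L : Set (List β)) extends MonAutoStruct R g L : Prop where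
  pre_reg : IsReg {p | ∃ x ∈ L, ∃ y : List β, (∃ z ∈ L, y <+: z) ∧
      WordEq R (expandW g x) (expandW g y) ∧ p = padR x y}

/-- A biautomatic structure for the monoid `sgp⟨α ∣ R⟩`. -/
structure MonBiautoStruct {α β : Type*} (R : Set (List α × List α))
    (g : β → List α) (L : Set (List β)) : Prop where
  reg : IsReg L
  ne : ∀ w ∈ L, w ≠ []
  onto : ∀ w : List α, ∃ x ∈ L, WordEq R (expandW g x) w
  eqR_reg : IsReg {p | ∃ x ∈ L, ∃ y ∈ L,
      WordEq R (expandW g x) (expandW g y) ∧ p = padR x y}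
  eqL_reg : IsReg {p | ∃ x ∈ L, ∃ y ∈ L,
      WordEq R (expandW g x) (expandW g y) ∧ p = padL x y}
  mulRR_reg : ∀ b : β, IsReg {p | ∃ x ∈ L, ∃ y ∈ L,
      WordEq R (expandW g x ++ g b) (expandW g y) ∧ p = padR x y}
  mulLR_reg : ∀ b : β, IsReg {p | ∃ x ∈ L, ∃ y ∈ L,
      WordEq R (g b ++ expandW g x) (expandW g y) ∧ p = padR x y}
  mulRL_reg : ∀ b : β, IsReg {p | ∃ x ∈ L, ∃ y ∈ L,
      WordEq R (expandW g x ++ g b) (expandW g y) ∧ p = padL x y}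
  mulLL_reg : ∀ b : β, IsReg {p | ∃ x ∈ L, ∃ y ∈ L,
      WordEq R (g b ++ expandW g x) (expandW g y) ∧ p = padL x y}

/-- The monoid `sgp⟨α ∣ R⟩` is automatic. -/
def MonAutomatic {α : Type*} (R : Set (List α × List α)) : Prop :=
  ∃ (β : Type) (_ : Fintype β) (g : β → List α) (L : Set (List β)),
    MonAutoStruct R g L

/-- The monoid `sgp⟨α ∣ R⟩` is prefix-automatic. -/
def MonPrefixAutomatic {α : Type*} (R : Set (List α × List α)) : Prop :=
  ∃ (β : Type) (_ : Fintype β) (g : β → List α) (L : Set (List β)),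
    MonPrefixAutoStruct R g L

/-- The monoid `sgp⟨α ∣ R⟩` is biautomatic. -/
def MonBiautomatic {α : Type*} (R : Set (List α × List α)) : Prop :=
  ∃ (β : Type) (_ : Fintype β) (g : β → List α) (L : Set (List β)),
    MonBiautoStruct R g L

/-- The defining relations of `S¹ = sgp⁺⟨α, e ∣ R, ea = ae = a, ee = e⟩`,
the monoid obtained from `S = sgp⁺⟨α ∣ R⟩` by adjoining an identity element,
presented as a semigroup over the alphabet `Option α` where `none` is the new
identity letter `e`. -/
def adjoinOne {α : Type*} (R : Set (List α × List α)) :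
    Set (List (Option α) × List (Option α)) :=
  {q | ∃ p ∈ R, q = (p.1.map some, p.2.map some)} ∪
    {q | ∃ a : α, q = ([none, some a], [some a])} ∪
    {q | ∃ a : α, q = ([some a, none], [some a])} ∪
    {([none, none], [none])}

namespace AuxS1


variable {γ δ : Type*}

@[simp] theorem padR_nil_nil : padR ([] : List γ) [] = [] := rfl

theorem padR_cons_cons (c d : γ) (a b : List γ) :
    padR (c :: a) (d :: b) = (some c, some d) :: padR a b := by
  simp [padR]

theorem padR_nil_left (y : List γ) :
    padR ([] : List γ) y = y.map fun d => (none, some d) := by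
  induction y with
  | nil => rfl
  | cons d b ih =>
      simp only [padR, List.map_nil, List.nil_append, List.length_nil, Nat.sub_zero,
        List.length_cons, List.map_cons, List.replicate_succ, Nat.zero_sub,
        List.replicate_zero, List.append_nil, List.zip_cons_cons] at *
      simpa using ih

theorem padR_nil_right (x : List γ) :
    padR x ([] : List γ) = x.map fun c => (some c, none) := by
  induction x with
  | nil => rfl
  | cons c a ih =>
      simp only [padR, List.map_nil, List.nil_append, List.length_nil, Nat.sub_zero,
        List.length_cons, List.map_cons, List.replicate_succ, Nat.zero_sub,
        List.replicate_zero, List.append_nil, List.zip_cons_cons] at *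
      simpa using ih

theorem padR_map (f : γ → δ) (x y : List γ) :
    padR (x.map f) (y.map f) =
      (padR x y).map (Prod.map (Option.map f) (Option.map f)) := by
  induction x generalizing y with
  | nil =>
      simp [padR_nil_left, List.map_map]
  | cons c a ih =>
      cases y with
      | nil =>
          simp [padR_nil_right, List.map_map]
      | cons d b =>
          simp [padR_cons_cons, ih]

theorem padR_fst (x y : List γ) :
    (padR x y).map Prod.fst = x.map some ++ List.replicate (y.length - x.length) none := by
  apply List.map_fst_zip
  simp <;> omega

theorem padR_snd (x y : List γ) :
    (padR x y).map Prod.snd = y.map some ++ List.replicate (x.length - y.length) none := by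
  apply List.map_snd_zip
  simp <;> omega

theorem recover (l : List γ) (k : ℕ) :
    (l.map some ++ List.replicate k none).filterMap id = l := by
  have h2 : (List.replicate k (none : Option γ)).filterMap id = [] := by
    induction k with
    | zero => rfl
    | succ n ih => simpa [List.replicate_succ] using ih
  simp [List.filterMap_append, List.filterMap_map, h2]

theorem padR_inj {x y x' y' : List γ} (h : padR x y = padR x' y') : x = x' ∧ y = y' := by
  constructor
  · have := congrArg (fun l => (List.map Prod.fst l).filterMap id) h
    simpa only [padR_fst, recover] using this
  · have := congrArg (fun l => (List.map Prod.snd l).filterMap id) h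
    simpa only [padR_snd, recover] using this



variable {γ δ : Type*} {σ τ : Type}

/-! ### Union -/

def unionDFA (D : DFA γ σ) (E : DFA γ τ) : DFA γ (σ × τ) where
  step := fun p c => (D.step p.1 c, E.step p.2 c)
  start := (D.start, E.start)
  accept := {p | p.1 ∈ D.accept ∨ p.2 ∈ E.accept}

theorem unionDFA_evalFrom (D : DFA γ σ) (E : DFA γ τ) (w : List γ) (s : σ) (t : τ) :
    (unionDFA D E).evalFrom (s, t) w = (D.evalFrom s w, E.evalFrom t w) := by
  induction w generalizing s t with
  | nil => rfl
  | cons c w ih => exact ih _ _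

theorem IsReg.union {L M : Set (List γ)} (hL : IsReg L) (hM : IsReg M) :
    IsReg (L ∪ M) := by
  obtain ⟨σ, iσ, D, hD⟩ := hL
  obtain ⟨τ, iτ, E, hE⟩ := hM
  haveI := iσ; haveI := iτ
  refine ⟨σ × τ, inferInstance, unionDFA D E, ?_⟩
  ext w
  have : w ∈ (unionDFA D E).accepts ↔ w ∈ D.accepts ∨ w ∈ E.accepts := by
    simp only [DFA.mem_accepts, DFA.eval]
    rw [show (unionDFA D E).start = (D.start, E.start) from rfl, unionDFA_evalFrom]
    rfl
  rw [hD, hE] at this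
  exact this

/-! ### Singleton one-letter word -/

open Classical in
noncomputable def oneLetterDFA (c₀ : γ) : DFA γ (Fin 3) where
  step := fun s c => if s = 0 ∧ c = c₀ then 1 else 2
  start := 0
  accept := {1}

theorem oneLetterDFA_stuck (c₀ : γ) (w : List γ) (s : Fin 3) (hs : s ≠ 0) :
    (oneLetterDFA c₀).evalFrom s w = s ∨ (oneLetterDFA c₀).evalFrom s w = 2 := by
  induction w generalizing s with
  | nil => exact Or.inl rfl
  | cons c t ih =>
      have hstep : (oneLetterDFA c₀).step s c = 2 := by
        simp [oneLetterDFA, hs]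
      have hev : (oneLetterDFA c₀).evalFrom s (c :: t) =
          (oneLetterDFA c₀).evalFrom ((oneLetterDFA c₀).step s c) t := rfl
      rw [hev, hstep]
      rcases ih 2 (by decide) with h | h
      · exact Or.inr h
      · exact Or.inr h

theorem isReg_oneLetter (c₀ : γ) : IsReg ({[c₀]} : Set (List γ)) := by
  refine ⟨Fin 3, inferInstance, oneLetterDFA c₀, ?_⟩
  ext w
  show w ∈ (oneLetterDFA c₀).accepts ↔ w = [c₀]
  rw [DFA.mem_accepts]
  cases w with
  | nil => simp [DFA.eval, oneLetterDFA]
  | cons c t =>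
      have : (oneLetterDFA c₀).eval (c :: t) =
          (oneLetterDFA c₀).evalFrom ((oneLetterDFA c₀).step 0 c) t := rfl
      rw [this]
      by_cases hc : c = c₀
      · have hstep : (oneLetterDFA c₀).step 0 c = 1 := by simp [oneLetterDFA, hc]
        rw [hstep]
        cases t with
        | nil => simp [hc]; rfl
        | cons d t' =>
            have hstep2 : (oneLetterDFA c₀).step 1 d = 2 := by simp [oneLetterDFA]
            have : (oneLetterDFA c₀).evalFrom (1 : Fin 3) (d :: t') =
                (oneLetterDFA c₀).evalFrom ((oneLetterDFA c₀).step 1 d) t' := rfl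
            rw [this, hstep2]
            rcases oneLetterDFA_stuck c₀ t' 2 (by decide) with h | h <;>
              · rw [h]; simp [oneLetterDFA]
      · have hstep : (oneLetterDFA c₀).step 0 c = 2 := by simp [oneLetterDFA, hc]
        rw [hstep]
        rcases oneLetterDFA_stuck c₀ t 2 (by decide) with h | h <;>
          · rw [h]; simp [oneLetterDFA, hc]

/-! ### Image under an injective letter-to-letter map -/

open Classical in
noncomputable def invLetter (f : γ → δ) (d : δ) : Option γ :=
  if h : ∃ c, f c = d then some h.choose else none

theorem invLetter_apply {f : γ → δ} (hf : Function.Injective f) (c : γ) :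
    invLetter f (f c) = some c := by
  have h : ∃ c', f c' = f c := ⟨c, rfl⟩
  simp only [invLetter, dif_pos h]
  exact congrArg some (hf h.choose_spec)

theorem invLetter_eq_some {f : γ → δ} {d : δ} {c : γ} (h : invLetter f d = some c) :
    f c = d := by
  by_cases h' : ∃ c', f c' = d
  · simp only [invLetter, dif_pos h', Option.some.injEq] at h
    rw [← h]; exact h'.choose_spec
  · simp [invLetter, dif_neg h'] at h

noncomputable def mapDFA (f : γ → δ) (D : DFA γ σ) : DFA δ (Option σ) where
  step := fun s d => s.bind fun s' => (invLetter f d).map (D.step s')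
  start := some D.start
  accept := {x | ∃ s ∈ D.accept, x = some s}

theorem mapDFA_none (f : γ → δ) (D : DFA γ σ) (w : List δ) :
    (mapDFA f D).evalFrom none w = none := by
  induction w with
  | nil => rfl
  | cons c t ih => exact ih

theorem mapDFA_map {f : γ → δ} (hf : Function.Injective f) (D : DFA γ σ) (u : List γ)
    (s : σ) : (mapDFA f D).evalFrom (some s) (u.map f) = some (D.evalFrom s u) := by
  induction u generalizing s with
  | nil => rfl
  | cons c t ih =>
      have hstep : (mapDFA f D).step (some s) (f c) = some (D.step s c) := by
        simp [mapDFA, invLetter_apply hf]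
      show (mapDFA f D).evalFrom ((mapDFA f D).step (some s) (f c)) (t.map f) = _
      rw [hstep]; exact ih _

theorem mapDFA_eq_some {f : γ → δ} (D : DFA γ σ) (w : List δ) :
    ∀ (s t : σ), (mapDFA f D).evalFrom (some s) w = some t →
      ∃ u, w = u.map f ∧ D.evalFrom s u = t := by
  induction w with
  | nil =>
      intro s t h
      refine ⟨[], rfl, ?_⟩
      simpa using h
  | cons d w' ih =>
      intro s t h
      rcases hg : invLetter f d with _ | c
      · have hstep : (mapDFA f D).step (some s) d = none := by simp [mapDFA, hg]
        rw [show (mapDFA f D).evalFrom (some s) (d :: w') =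
          (mapDFA f D).evalFrom ((mapDFA f D).step (some s) d) w' from rfl, hstep,
          mapDFA_none] at h
        exact absurd h (by simp)
      · have hstep : (mapDFA f D).step (some s) d = some (D.step s c) := by
          simp [mapDFA, hg]
        rw [show (mapDFA f D).evalFrom (some s) (d :: w') =
          (mapDFA f D).evalFrom ((mapDFA f D).step (some s) d) w' from rfl, hstep] at h
        obtain ⟨u, hu, hev⟩ := ih _ _ h
        exact ⟨c :: u, by simp [hu, invLetter_eq_some hg], hev⟩

theorem isReg_map {f : γ → δ} (hf : Function.Injective f) {M : Set (List γ)}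
    (h : IsReg M) : IsReg {w | ∃ u ∈ M, w = u.map f} := by
  obtain ⟨σ, iσ, D, hD⟩ := h
  haveI := iσ
  refine ⟨Option σ, inferInstance, mapDFA f D, ?_⟩
  ext w
  show w ∈ (mapDFA f D).accepts ↔ ∃ u ∈ M, w = u.map f
  rw [DFA.mem_accepts]
  constructor
  · intro hw
    obtain ⟨t, ht, hsome⟩ := hw
    obtain ⟨u, hu, hev⟩ := mapDFA_eq_some D w D.start t hsome
    refine ⟨u, ?_, hu⟩
    have : u ∈ D.accepts := by
      rw [DFA.mem_accepts, DFA.eval, hev]; exact ht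
    rw [hD] at this; exact this
  · rintro ⟨u, hu, rfl⟩
    have : u ∈ D.accepts := by rw [hD]; exact hu
    rw [DFA.mem_accepts] at this
    exact ⟨D.eval u, this, mapDFA_map hf D u D.start⟩

def finInc {n : ℕ} (i : Fin (n + 1)) : Fin (n + 1) :=
  if h : (i : ℕ) < n then ⟨(i : ℕ) + 1, by omega⟩ else i

theorem finInc_of_lt {n : ℕ} {i : Fin (n + 1)} (h : (i : ℕ) < n) :
    finInc i = ⟨(i : ℕ) + 1, by omega⟩ := dif_pos h

theorem finInc_of_eq {n : ℕ} {i : Fin (n + 1)} (h : ¬ (i : ℕ) < n) :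
    finInc i = i := dif_neg h

/-! ### Preimage under `padR x₀ ·` -/

def preDFA (x₀ : List γ) (D : DFA (Option γ × Option γ) σ) :
    DFA γ (σ × Fin (x₀.length + 1)) where
  step := fun p c => (D.step p.1 (x₀[(p.2 : ℕ)]?, some c), finInc p.2)
  start := (D.start, ⟨0, by omega⟩)
  accept := {p | D.evalFrom p.1 ((x₀.drop (p.2 : ℕ)).map fun c => (some c, none)) ∈ D.accept}

theorem preDFA_eval (x₀ : List γ) (D : DFA (Option γ × Option γ) σ) (y : List γ) :
    ∀ (k : ℕ) (hk : k ≤ x₀.length) (s : σ),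
      ((preDFA x₀ D).evalFrom (s, ⟨k, by omega⟩) y ∈ (preDFA x₀ D).accept ↔
        D.evalFrom s (padR (x₀.drop k) y) ∈ D.accept) := by
  induction y with
  | nil =>
      intro k hk s
      rw [padR_nil_right]
      rfl
  | cons c t ih =>
      intro k hk s
      have hstep : (preDFA x₀ D).evalFrom (s, ⟨k, by omega⟩) (c :: t) =
          (preDFA x₀ D).evalFrom ((preDFA x₀ D).step (s, ⟨k, by omega⟩) c) t := rfl
      rw [hstep]
      by_cases h : k < x₀.length
      · have h1 : x₀[k]? = some (x₀[k]'h) := List.getElem?_eq_getElem h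
        have h2 : (preDFA x₀ D).step (s, ⟨k, by omega⟩) c =
            (D.step s (some (x₀[k]'h), some c), ⟨k + 1, by omega⟩) := by
          show (_, finInc _) = _
          rw [finInc_of_lt (by simpa using h)]
          simp [preDFA, h1]
        rw [h2, ih (k + 1) (by omega) _,
          List.drop_eq_getElem_cons h, padR_cons_cons]
        rfl
      · have hk' : k = x₀.length := by omega
        have h1 : x₀[k]? = none := by
          rw [List.getElem?_eq_none]; omega
        have h2 : (preDFA x₀ D).step (s, ⟨k, by omega⟩) c =
            (D.step s (none, some c), ⟨k, by omega⟩) := by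
          show (_, finInc _) = _
          rw [finInc_of_eq (by simpa using h)]
          simp [preDFA, h1]
        have h3 : x₀.drop k = [] := by rw [hk']; exact List.drop_length
        rw [h2, ih k hk _, h3, padR_nil_left, padR_nil_left, List.map_cons]
        rfl

theorem isReg_padR_preimage (x₀ : List γ) {P : Set (List (Option γ × Option γ))}
    (h : IsReg P) : IsReg {y | padR x₀ y ∈ P} := by
  obtain ⟨σ, iσ, D, hD⟩ := h
  haveI := iσ
  refine ⟨σ × Fin (x₀.length + 1), inferInstance, preDFA x₀ D, ?_⟩
  ext y
  rw [DFA.mem_accepts]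
  have h0 := preDFA_eval x₀ D y 0 (Nat.zero_le _) D.start
  rw [List.drop_zero] at h0
  have h1 : padR x₀ y ∈ D.accepts ↔ padR x₀ y ∈ P := by rw [hD]; exact Iff.rfl
  exact h0.trans ((DFA.mem_accepts _).symm.trans h1)

/-! ### Image of a regular language under `padR x₀ ·` -/

open Classical in
noncomputable def imgDFA (x₀ : List γ) (D : DFA γ σ) :
    DFA (Option γ × Option γ) (Option (σ × Fin (x₀.length + 1) × Bool)) where
  step := fun st pq =>
    match st with
    | none => none
    | some (s, i, b) =>
      if pq.1 = x₀[(i : ℕ)]? then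
        match pq.2, b with
        | some c, false => some (D.step s c, finInc i, false)
        | none, _ => if (i : ℕ) < x₀.length then some (s, finInc i, true) else none
        | some _, true => none
      else none
  start := some (D.start, ⟨0, by omega⟩, false)
  accept := {st | ∃ p, st = some p ∧ p.1 ∈ D.accept ∧ (p.2.1 : ℕ) = x₀.length}

variable (x₀ : List γ) (D : DFA γ σ)

theorem imgDFA_step_sf (s : σ) (i : Fin (x₀.length + 1)) (p : Option γ) (c : γ)
    (hp : p = x₀[(i : ℕ)]?) :
    (imgDFA x₀ D).step (some (s, i, false)) (p, some c) =
      some (D.step s c, finInc i, false) := by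
  simp [imgDFA, hp]

theorem imgDFA_step_nq (s : σ) (i : Fin (x₀.length + 1)) (b : Bool) (p : Option γ)
    (hp : p = x₀[(i : ℕ)]?) (hi : (i : ℕ) < x₀.length) :
    (imgDFA x₀ D).step (some (s, i, b)) (p, none) = some (s, finInc i, true) := by
  simp [imgDFA, hp, hi]

theorem imgDFA_step_bad (s : σ) (i : Fin (x₀.length + 1)) (b : Bool)
    (p : Option γ) (q : Option γ) (hp : ¬ p = x₀[(i : ℕ)]?) :
    (imgDFA x₀ D).step (some (s, i, b)) (p, q) = none := by
  simp [imgDFA, hp]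

theorem imgDFA_step_ts (s : σ) (i : Fin (x₀.length + 1)) (p : Option γ) (c : γ) :
    (imgDFA x₀ D).step (some (s, i, true)) (p, some c) = none := by
  by_cases hp : p = x₀[(i : ℕ)]? <;> simp [imgDFA, hp]

theorem imgDFA_step_nbig (s : σ) (i : Fin (x₀.length + 1)) (b : Bool) (p : Option γ)
    (hi : ¬ (i : ℕ) < x₀.length) :
    (imgDFA x₀ D).step (some (s, i, b)) (p, none) = none := by
  by_cases hp : p = x₀[(i : ℕ)]? <;> simp [imgDFA, hp, hi]

theorem imgDFA_none (w : List (Option γ × Option γ)) :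
    (imgDFA x₀ D).evalFrom none w = none := by
  induction w with
  | nil => rfl
  | cons c t ih => exact ih

theorem imgDFA_none_notacc (w : List (Option γ × Option γ)) :
    (imgDFA x₀ D).evalFrom none w ∉ (imgDFA x₀ D).accept := by
  rw [imgDFA_none]
  rintro ⟨p, hp, -⟩
  exact absurd hp (by simp)

theorem imgDFA_evalFrom_cons (st : Option (σ × Fin (x₀.length + 1) × Bool))
    (pq : Option γ × Option γ) (t : List (Option γ × Option γ)) :
    (imgDFA x₀ D).evalFrom st (pq :: t) =
      (imgDFA x₀ D).evalFrom ((imgDFA x₀ D).step st pq) t := rfl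

theorem imgDFA_tail :
    ∀ (m : ℕ) (i : Fin (x₀.length + 1)) (s : σ), (i : ℕ) + m = x₀.length →
      (imgDFA x₀ D).evalFrom (some (s, i, true))
          ((x₀.drop (i : ℕ)).map fun c => (some c, none)) =
        some (s, ⟨x₀.length, by omega⟩, true) := by
  intro m
  induction m with
  | zero =>
      intro i s hi
      have h1 : (i : ℕ) = x₀.length := by omega
      rw [h1, List.drop_length]
      show some (s, i, true) = _
      have h2 : i = ⟨x₀.length, by omega⟩ := Fin.ext (by simpa using h1)
      rw [h2]
  | succ m ih =>
      intro i s hi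
      have h : (i : ℕ) < x₀.length := by omega
      rw [List.drop_eq_getElem_cons h, List.map_cons, imgDFA_evalFrom_cons,
        imgDFA_step_nq x₀ D s i true _ (List.getElem?_eq_getElem h).symm h,
        finInc_of_lt h]
      have := ih ⟨(i : ℕ) + 1, by omega⟩ s (by simp <;> omega)
      simpa using this

theorem imgDFA_run (y : List γ) :
    ∀ (i : Fin (x₀.length + 1)) (s : σ),
      (imgDFA x₀ D).evalFrom (some (s, i, false)) (padR (x₀.drop (i : ℕ)) y) =
        some (D.evalFrom s y, ⟨x₀.length, by omega⟩,
          decide ((i : ℕ) + y.length < x₀.length)) := by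
  induction y with
  | nil =>
      intro i s
      rw [padR_nil_right]
      by_cases h : (i : ℕ) < x₀.length
      · rw [List.drop_eq_getElem_cons h, List.map_cons, imgDFA_evalFrom_cons,
          imgDFA_step_nq x₀ D s i false _ (List.getElem?_eq_getElem h).symm h,
          finInc_of_lt h]
        have := imgDFA_tail x₀ D (x₀.length - ((i : ℕ) + 1)) ⟨(i : ℕ) + 1, by omega⟩ s
          (by simp <;> omega)
        simp only [List.length_nil, Nat.add_zero]
        rw [show decide ((i : ℕ) < x₀.length) = true from by simpa using h]
        simpa using this
      · have h1 : (i : ℕ) = x₀.length := by omega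
        rw [h1, List.drop_length]
        show some (s, i, false) = _
        simp [Prod.ext_iff, Fin.ext_iff, h1]
  | cons c t ih =>
      intro i s
      by_cases h : (i : ℕ) < x₀.length
      · rw [List.drop_eq_getElem_cons h, padR_cons_cons, imgDFA_evalFrom_cons,
          imgDFA_step_sf x₀ D s i _ c (List.getElem?_eq_getElem h).symm,
          finInc_of_lt h]
        have := ih ⟨(i : ℕ) + 1, by omega⟩ (D.step s c)
        simp only [Fin.val_mk] at this
        rw [this]
        congr 1
        rw [Prod.ext_iff]
        refine ⟨rfl, ?_⟩
        rw [Prod.ext_iff]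
        refine ⟨rfl, ?_⟩
        show decide _ = decide _
        rw [decide_eq_decide]
        simp <;> omega
      · have h1 : (i : ℕ) = x₀.length := by omega
        have h2 : x₀[(i : ℕ)]? = none := by rw [List.getElem?_eq_none]; omega
        rw [h1, List.drop_length, padR_nil_left, List.map_cons, imgDFA_evalFrom_cons,
          imgDFA_step_sf x₀ D s i none c h2.symm, finInc_of_eq h]
        have := ih i (D.step s c)
        rw [h1, List.drop_length, padR_nil_left] at this
        rw [this]
        congr 1
        rw [Prod.ext_iff]
        refine ⟨rfl, ?_⟩
        rw [Prod.ext_iff]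
        refine ⟨rfl, ?_⟩
        show decide _ = decide _
        rw [decide_eq_decide]
        simp <;> omega

theorem imgDFA_back_true (w : List (Option γ × Option γ)) :
    ∀ (i : Fin (x₀.length + 1)) (s : σ),
      (imgDFA x₀ D).evalFrom (some (s, i, true)) w ∈ (imgDFA x₀ D).accept →
      w = ((x₀.drop (i : ℕ)).map fun c => (some c, none)) ∧ s ∈ D.accept := by
  induction w with
  | nil =>
      intro i s h
      obtain ⟨p, hp, hacc, hlen⟩ := h
      have hp' : (s, i, true) = p := Option.some_inj.mp hp
      subst hp'
      have h1 : (i : ℕ) = x₀.length := hlen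
      rw [h1, List.drop_length]
      exact ⟨rfl, hacc⟩
  | cons pq t ih =>
      intro i s h
      obtain ⟨p, q⟩ := pq
      rw [imgDFA_evalFrom_cons] at h
      by_cases hp : p = x₀[(i : ℕ)]?
      · cases q with
        | some c =>
            rw [imgDFA_step_ts] at h
            exact absurd h (imgDFA_none_notacc x₀ D t)
        | none =>
            by_cases hi : (i : ℕ) < x₀.length
            · rw [imgDFA_step_nq x₀ D s i true p hp hi, finInc_of_lt hi] at h
              obtain ⟨ht, hacc⟩ := ih ⟨(i : ℕ) + 1, by omega⟩ s h
              refine ⟨?_, hacc⟩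
              rw [List.drop_eq_getElem_cons hi, List.map_cons]
              simp only [Fin.val_mk] at ht
              rw [← ht, hp, List.getElem?_eq_getElem hi]
            · rw [imgDFA_step_nbig x₀ D s i true p hi] at h
              exact absurd h (imgDFA_none_notacc x₀ D t)
      · rw [imgDFA_step_bad x₀ D s i true p q hp] at h
        exact absurd h (imgDFA_none_notacc x₀ D t)

theorem imgDFA_back_false (w : List (Option γ × Option γ)) :
    ∀ (i : Fin (x₀.length + 1)) (s : σ),
      (imgDFA x₀ D).evalFrom (some (s, i, false)) w ∈ (imgDFA x₀ D).accept →
      ∃ y, w = padR (x₀.drop (i : ℕ)) y ∧ D.evalFrom s y ∈ D.accept := by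
  induction w with
  | nil =>
      intro i s h
      obtain ⟨p, hp, hacc, hlen⟩ := h
      have hp' : (s, i, false) = p := Option.some_inj.mp hp
      subst hp'
      have h1 : (i : ℕ) = x₀.length := hlen
      refine ⟨[], ?_, hacc⟩
      rw [h1, List.drop_length]
      rfl
  | cons pq t ih =>
      intro i s h
      obtain ⟨p, q⟩ := pq
      rw [imgDFA_evalFrom_cons] at h
      by_cases hp : p = x₀[(i : ℕ)]?
      · cases q with
        | some c =>
            rw [imgDFA_step_sf x₀ D s i p c hp] at h
            by_cases hi : (i : ℕ) < x₀.length
            · rw [finInc_of_lt hi] at h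
              obtain ⟨y, hy, hacc⟩ := ih ⟨(i : ℕ) + 1, by omega⟩ (D.step s c) h
              refine ⟨c :: y, ?_, hacc⟩
              rw [List.drop_eq_getElem_cons hi, padR_cons_cons]
              simp only [Fin.val_mk] at hy
              rw [← hy, hp, List.getElem?_eq_getElem hi]
            · rw [finInc_of_eq hi] at h
              obtain ⟨y, hy, hacc⟩ := ih i (D.step s c) h
              have h1 : (i : ℕ) = x₀.length := by omega
              have h2 : x₀[(i : ℕ)]? = none := by rw [List.getElem?_eq_none]; omega
              refine ⟨c :: y, ?_, hacc⟩
              rw [h1, List.drop_length, padR_nil_left, List.map_cons]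
              rw [h1, List.drop_length, padR_nil_left] at hy
              rw [← hy, hp, h2]
        | none =>
            by_cases hi : (i : ℕ) < x₀.length
            · rw [imgDFA_step_nq x₀ D s i false p hp hi, finInc_of_lt hi] at h
              obtain ⟨ht, hacc⟩ := imgDFA_back_true x₀ D t ⟨(i : ℕ) + 1, by omega⟩ s h
              refine ⟨[], ?_, hacc⟩
              rw [padR_nil_right, List.drop_eq_getElem_cons hi, List.map_cons]
              simp only [Fin.val_mk] at ht
              rw [← ht, hp, List.getElem?_eq_getElem hi]
            · rw [imgDFA_step_nbig x₀ D s i false p hi] at h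
              exact absurd h (imgDFA_none_notacc x₀ D t)
      · rw [imgDFA_step_bad x₀ D s i false p q hp] at h
        exact absurd h (imgDFA_none_notacc x₀ D t)

theorem isReg_padR_image (x₀ : List γ) {M : Set (List γ)} (h : IsReg M) :
    IsReg {w | ∃ y ∈ M, w = padR x₀ y} := by
  obtain ⟨σ, iσ, D, hD⟩ := h
  haveI := iσ
  refine ⟨Option (σ × Fin (x₀.length + 1) × Bool), inferInstance, imgDFA x₀ D, ?_⟩
  ext w
  rw [DFA.mem_accepts]
  constructor
  · intro hw
    obtain ⟨y, hy, hacc⟩ := imgDFA_back_false x₀ D w ⟨0, by omega⟩ D.start hw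
    rw [List.drop_zero] at hy
    refine ⟨y, ?_, hy⟩
    have : y ∈ D.accepts := hacc
    rw [hD] at this
    exact this
  · rintro ⟨y, hy, rfl⟩
    have hrun := imgDFA_run x₀ D y ⟨0, by omega⟩ D.start
    rw [List.drop_zero] at hrun
    show (imgDFA x₀ D).evalFrom (imgDFA x₀ D).start (padR x₀ y) ∈ _
    rw [show (imgDFA x₀ D).start = some (D.start, ⟨0, by omega⟩, false) from rfl, hrun]
    refine ⟨_, rfl, ?_, rfl⟩
    have : y ∈ D.accepts := by rw [hD]; exact hy
    exact this



variable {α : Type*} {X Y : Type*}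

theorem expandW_singleton (x : List α) : expandW (fun a => [a]) x = x := by
  induction x with
  | nil => rfl
  | cons a t ih =>
      simp only [expandW, List.map_cons, List.flatten_cons, List.singleton_append] at *
      rw [ih]

/-- Lift `EqvGen` along a map. -/
theorem eqvGen_lift {r : X → X → Prop} {r' : Y → Y → Prop} (h : X → Y)
    (hmap : ∀ a b, r a b → Relation.EqvGen r' (h a) (h b)) {x y : X}
    (he : Relation.EqvGen r x y) : Relation.EqvGen r' (h x) (h y) := by
  induction he with
  | rel a b hab => exact hmap a b hab
  | refl a => exact Relation.EqvGen.refl _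
  | symm a b _ ih => exact Relation.EqvGen.symm _ _ ih
  | trans a b c _ _ ih1 ih2 => exact Relation.EqvGen.trans _ _ _ ih1 ih2

/-- membership helpers for `adjoinOne` -/
theorem mem_adjoinOne_lift {R : Set (List α × List α)} {u v : List α} (h : (u, v) ∈ R) :
    (u.map some, v.map some) ∈ adjoinOne R :=
  Or.inl (Or.inl (Or.inl ⟨(u, v), h, rfl⟩))

theorem mem_adjoinOne_ea {R : Set (List α × List α)} (a : α) :
    (([none, some a] : List (Option α)), [some a]) ∈ adjoinOne R :=
  Or.inl (Or.inl (Or.inr ⟨a, rfl⟩))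

theorem mem_adjoinOne_ae {R : Set (List α × List α)} (a : α) :
    (([some a, none] : List (Option α)), [some a]) ∈ adjoinOne R :=
  Or.inl (Or.inr ⟨a, rfl⟩)

theorem mem_adjoinOne_ee {R : Set (List α × List α)} :
    (([none, none] : List (Option α)), [none]) ∈ adjoinOne R :=
  Or.inr rfl

/-- Nonemptiness is preserved. -/
theorem oneStep_ne {R : Set (List α × List α)} (hR : ∀ q ∈ R, q.1 ≠ [] ∧ q.2 ≠ [])
    {x y : List α} (h : OneStep R x y) : x ≠ [] ∧ y ≠ [] := by
  obtain ⟨p, u, v, s, hm, rfl, rfl⟩ := h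
  obtain ⟨hu, hv⟩ := hR _ hm
  constructor <;> simp [hu, hv]

theorem wordEq_ne {R : Set (List α × List α)} (hR : ∀ q ∈ R, q.1 ≠ [] ∧ q.2 ≠ [])
    {x y : List α} (h : WordEq R x y) : x = [] ↔ y = [] := by
  induction h with
  | rel a b hab =>
      obtain ⟨ha, hb⟩ := oneStep_ne hR hab
      simp [ha, hb]
  | refl a => rfl
  | symm a b _ ih => exact ih.symm
  | trans a b c _ _ ih1 ih2 => exact ih1.trans ih2

theorem adjoinOne_sides_ne {R : Set (List α × List α)}
    (hR : ∀ q ∈ R, q.1 ≠ [] ∧ q.2 ≠ []) :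
    ∀ q ∈ adjoinOne R, q.1 ≠ [] ∧ q.2 ≠ [] := by
  rintro q (((⟨p, hp, rfl⟩ | ⟨a, rfl⟩) | ⟨a, rfl⟩) | rfl)
  · obtain ⟨h1, h2⟩ := hR p hp
    constructor <;> simp [h1, h2]
  · simp
  · simp
  · simp

theorem wordEq_of_eq {R : Set (List α × List α)} {x y : List α} (h : x = y) : WordEq R x y := by
  rw [h]; exact Relation.EqvGen.refl _

/-- Congruence: prepend a letter. -/
theorem wordEq_cons {R : Set (List α × List α)} (c : α) {x y : List α}
    (h : WordEq R x y) : WordEq R (c :: x) (c :: y) := by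
  refine eqvGen_lift (fun l => c :: l) ?_ h
  rintro a b ⟨p, u, v, s, hm, rfl, rfl⟩
  exact Relation.EqvGen.rel _ _ ⟨c :: p, u, v, s, hm, by simp, by simp⟩

/-- Lifting relations from `R` to `adjoinOne R`. -/
theorem wordEq_lift {R : Set (List α × List α)} {x y : List α} (h : WordEq R x y) :
    WordEq (adjoinOne R) (x.map some) (y.map some) := by
  refine eqvGen_lift (fun l => l.map some) ?_ h
  rintro a b ⟨p, u, v, s, hm, rfl, rfl⟩
  exact Relation.EqvGen.rel _ _
    ⟨p.map some, u.map some, v.map some, s.map some, mem_adjoinOne_lift hm,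
      by simp, by simp⟩

/-- Projection (deleting the identity letter) maps `adjoinOne R`-equality to `R`-equality. -/
theorem wordEq_proj {R : Set (List α × List α)} {x y : List (Option α)}
    (h : WordEq (adjoinOne R) x y) :
    WordEq R (x.filterMap id) (y.filterMap id) := by
  refine eqvGen_lift (fun l => l.filterMap id) ?_ h
  rintro a b ⟨p, u, v, s, hm, rfl, rfl⟩
  rcases hm with ((⟨q, hq, hquv⟩ | ⟨a, ha⟩) | ⟨a, ha⟩) | hee
  · obtain ⟨h1, h2⟩ : u = q.1.map some ∧ v = q.2.map some := by
      constructor <;> simp [Prod.ext_iff] at hquv <;> tauto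
    subst h1; subst h2
    refine Relation.EqvGen.rel _ _ ⟨p.filterMap id, q.1, q.2, s.filterMap id, hq, ?_, ?_⟩ <;>
      simp [List.filterMap_append, List.filterMap_map]
    <;> rfl
  · obtain ⟨h1, h2⟩ : u = [none, some a] ∧ v = [some a] := by
      simp [Prod.ext_iff] at ha; tauto
    subst h1; subst h2
    exact wordEq_of_eq (by simp [List.filterMap_append])
  · obtain ⟨h1, h2⟩ : u = [some a, none] ∧ v = [some a] := by
      simp [Prod.ext_iff] at ha; tauto
    subst h1; subst h2
    exact wordEq_of_eq (by simp [List.filterMap_append])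
  · obtain ⟨h1, h2⟩ : u = [none, none] ∧ v = [none] := by
      simp [Prod.ext_iff] at hee; tauto
    subst h1; subst h2
    exact wordEq_of_eq (by simp [List.filterMap_append])

/-- Any all-identity word equals `[none]`. -/
theorem wordEq_canon_none {R : Set (List α × List α)} :
    ∀ (w : List (Option α)), w ≠ [] → w.filterMap id = [] →
      WordEq (adjoinOne R) w [none] := by
  intro w
  induction w with
  | nil => intro h; exact absurd rfl h
  | cons c t ih =>
      intro _ hfil
      have hc : c = none := by
        cases c with
        | none => rfl
        | some a => simp at hfil
      subst hc
      have hft : t.filterMap id = [] := by simpa using hfil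
      by_cases ht : t = []
      · subst ht; exact Relation.EqvGen.refl _
      · have h1 := ih ht hft
        have h2 := wordEq_cons (none : Option α) h1
        exact Relation.EqvGen.trans _ _ _ h2
          (Relation.EqvGen.rel _ _ ⟨[], [none, none], [none], [], mem_adjoinOne_ee, rfl, rfl⟩)

/-- Any word with a non-identity letter equals the word of its non-identity letters. -/
theorem wordEq_canon_some {R : Set (List α × List α)} :
    ∀ (w : List (Option α)), w.filterMap id ≠ [] →
      WordEq (adjoinOne R) w ((w.filterMap id).map some) := by
  intro w
  induction w with
  | nil => intro h; exact absurd rfl h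
  | cons c t ih =>
      intro hfil
      cases c with
      | some a =>
          have hw : (some a :: t).filterMap id = a :: t.filterMap id := by simp
          rw [hw, List.map_cons]
          by_cases hft : t.filterMap id = []
          · rw [hft, List.map_nil]
            by_cases ht : t = []
            · subst ht; exact Relation.EqvGen.refl _
            · have h1 : WordEq (adjoinOne R) t [none] := wordEq_canon_none t ht hft
              have h2 := wordEq_cons (some a) h1
              exact Relation.EqvGen.trans _ _ _ h2
                (Relation.EqvGen.rel _ _
                  ⟨[], [some a, none], [some a], [], mem_adjoinOne_ae a, rfl, rfl⟩)
          · exact wordEq_cons (some a) (ih hft)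
      | none =>
          have hw : (none :: t).filterMap id = t.filterMap id := by simp
          rw [hw]
          have hft : t.filterMap id ≠ [] := by
            intro h; exact hfil (by simpa using h)
          have h1 := wordEq_cons (none : Option α) (ih hft)
          refine Relation.EqvGen.trans _ _ _ h1 ?_
          obtain ⟨b, l, hbl⟩ : ∃ b l, t.filterMap id = b :: l := by
            cases h : t.filterMap id with
            | nil => exact absurd h hft
            | cons b l => exact ⟨b, l, rfl⟩
          rw [hbl, List.map_cons]
          exact Relation.EqvGen.rel _ _
            ⟨[], [none, some b], [some b], l.map some, mem_adjoinOne_ea b, rfl, rfl⟩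

/-- The key characterisation of equality in `S¹` for nonempty words. -/
theorem wordEq_adjoin_iff {R : Set (List α × List α)}
    (hR : ∀ q ∈ R, q.1 ≠ [] ∧ q.2 ≠ []) {x y : List (Option α)}
    (hx : x ≠ []) (hy : y ≠ []) :
    WordEq (adjoinOne R) x y ↔ WordEq R (x.filterMap id) (y.filterMap id) := by
  constructor
  · exact wordEq_proj
  · intro h
    by_cases hfx : x.filterMap id = []
    · have hfy : y.filterMap id = [] := (wordEq_ne hR h).mp hfx
      exact Relation.EqvGen.trans _ _ _ (wordEq_canon_none x hx hfx)
        (Relation.EqvGen.symm _ _ (wordEq_canon_none y hy hfy))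
    · have hfy : y.filterMap id ≠ [] := fun h' => hfx ((wordEq_ne hR h).mpr h')
      refine Relation.EqvGen.trans _ _ _ (wordEq_canon_some x hfx) ?_
      refine Relation.EqvGen.trans _ _ _ (wordEq_lift h) ?_
      exact Relation.EqvGen.symm _ _ (wordEq_canon_some y hfy)

/-- Appending the identity letter. -/
theorem wordEq_append_none {R : Set (List α × List α)} {x : List (Option α)}
    (hx : x ≠ []) : WordEq (adjoinOne R) (x ++ [none]) x := by
  rcases List.eq_nil_or_concat x with rfl | ⟨l, b, rfl⟩
  · exact absurd rfl hx
  · rw [List.concat_eq_append]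
    cases b with
    | none =>
        refine Relation.EqvGen.rel _ _ ⟨l, [none, none], [none], [], mem_adjoinOne_ee, ?_, ?_⟩ <;>
          simp
    | some a =>
        refine Relation.EqvGen.rel _ _
          ⟨l, [some a, none], [some a], [], mem_adjoinOne_ae a, ?_, ?_⟩ <;> simp

theorem filterMap_id_map_some (u : List α) : (u.map some).filterMap id = u := by
  rw [List.filterMap_map]
  exact List.filterMap_some

theorem prefix_map_some {y : List (Option α)} {v : List α} (h : y <+: v.map some) :
    ∃ w, w <+: v ∧ y = w.map some := by
  refine ⟨v.take y.length, List.take_prefix _ _, ?_⟩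
  rw [List.map_take]
  exact List.prefix_iff_eq_take.mp h

theorem prefix_single {c : α} {y : List α} (h : y <+: [c]) : y = [] ∨ y = [c] := by
  rcases h with ⟨t, ht⟩
  cases y with
  | nil => exact Or.inl rfl
  | cons d y' =>
      right
      simp only [List.cons_append, List.cons.injEq, List.append_eq_nil_iff] at ht
      obtain ⟨rfl, rfl, rfl⟩ := ht
      rfl


theorem padR_none_none {α : Type*} : padR ([none] : List (Option α)) [none] = [(some none, some none)] := rfl

end AuxS1

/-- if `(α, L)` is a prefix-automatic structure for the semigroup
`S = sgp⁺⟨α ∣ R⟩`, then `(α ∪ {e}, L ∪ {e})` is a prefix-automatic structure for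
the monoid `S¹ = sgp⁺⟨α, e ∣ R, ea = ae = a, ee = e⟩` obtained by adjoining an
identity element `e` (modelled by the letter `none`). -/
theorem statement_1 {α : Type} [Fintype α] (R : Set (List α × List α))
    (hR : ∀ q ∈ R, q.1 ≠ [] ∧ q.2 ≠ []) (L : Set (List α))
    (hL : SgpPrefixAutoStruct R (fun a => [a]) L) :
    SgpPrefixAutoStruct (adjoinOne R) (fun b => [b])
      ({w | ∃ l ∈ L, w = l.map some} ∪ {[(none : Option α)]}) := by
  classical
  have someInj : Function.Injective (Option.some : α → Option α) := Option.some_injective α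
  have FInj : Function.Injective
      (Prod.map (Option.map (Option.some : α → Option α)) (Option.map Option.some)) :=
    (Option.map_injective someInj).prodMap (Option.map_injective someInj)
  have hadj := AuxS1.adjoinOne_sides_ne hR
  have hKne : ∀ w ∈ ({w | ∃ l ∈ L, w = l.map some} ∪ {[(none : Option α)]} :
      Set (List (Option α))), w ≠ [] := by
    rintro w (⟨l, hl, rfl⟩ | rfl)
    · simpa using hL.ne l hl
    · simp
  -- the equality language
  have hset : {p | ∃ x ∈ ({w | ∃ l ∈ L, w = l.map some} ∪ {[(none : Option α)]} :
        Set (List (Option α))), ∃ y ∈ ({w | ∃ l ∈ L, w = l.map some} ∪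
        {[(none : Option α)]} : Set (List (Option α))),
        WordEq (adjoinOne R) (expandW (fun b => [b]) x) (expandW (fun b => [b]) y) ∧
          p = padR x y}
      = {w | ∃ u ∈ {p | ∃ x ∈ L, ∃ y ∈ L,
            WordEq R (expandW (fun a => [a]) x) (expandW (fun a => [a]) y) ∧ p = padR x y},
          w = u.map (Prod.map (Option.map (Option.some : α → Option α)) (Option.map Option.some))}
        ∪ {[(some none, some none)]} := by
    ext p
    constructor
    · rintro ⟨x, hx, y, hy, heq, rfl⟩
      rw [AuxS1.expandW_singleton, AuxS1.expandW_singleton] at heq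
      have hproj := AuxS1.wordEq_proj heq
      rcases hx with ⟨u, hu, rfl⟩ | rfl
      · rcases hy with ⟨v, hv, rfl⟩ | rfl
        · rw [AuxS1.filterMap_id_map_some, AuxS1.filterMap_id_map_some] at hproj
          exact Or.inl ⟨padR u v, ⟨u, hu, v, hv, by
            rw [AuxS1.expandW_singleton, AuxS1.expandW_singleton]; exact hproj, rfl⟩,
            AuxS1.padR_map _ u v⟩
        · exfalso
          rw [AuxS1.filterMap_id_map_some,
            show (([none] : List (Option α)).filterMap id) = [] from rfl] at hproj
          exact hL.ne u hu ((AuxS1.wordEq_ne hR hproj).mpr rfl)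
      · rcases hy with ⟨v, hv, rfl⟩ | rfl
        · exfalso
          rw [AuxS1.filterMap_id_map_some,
            show (([none] : List (Option α)).filterMap id) = [] from rfl] at hproj
          exact hL.ne v hv ((AuxS1.wordEq_ne hR hproj).mp rfl)
        · exact Or.inr AuxS1.padR_none_none
    · rintro (⟨w', ⟨u, hu, v, hv, heq, rfl⟩, rfl⟩ | rfl)
      · rw [AuxS1.expandW_singleton, AuxS1.expandW_singleton] at heq
        refine ⟨u.map some, Or.inl ⟨u, hu, rfl⟩, v.map some, Or.inl ⟨v, hv, rfl⟩, ?_,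
          (AuxS1.padR_map _ u v).symm⟩
        rw [AuxS1.expandW_singleton, AuxS1.expandW_singleton]
        exact AuxS1.wordEq_lift heq
      · exact ⟨[none], Or.inr rfl, [none], Or.inr rfl, Relation.EqvGen.refl _,
          AuxS1.padR_none_none.symm⟩
  have hsetreg : IsReg {p | ∃ x ∈ ({w | ∃ l ∈ L, w = l.map some} ∪
        {[(none : Option α)]} : Set (List (Option α))),
      ∃ y ∈ ({w | ∃ l ∈ L, w = l.map some} ∪ {[(none : Option α)]} : Set (List (Option α))),
        WordEq (adjoinOne R) (expandW (fun b => [b]) x) (expandW (fun b => [b]) y) ∧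
          p = padR x y} := by
    rw [hset]
    exact AuxS1.IsReg.union (AuxS1.isReg_map FInj hL.eq_reg) (AuxS1.isReg_oneLetter _)
  refine ⟨⟨fun b => by simp, ?_, hKne, ?_, hsetreg, ?_⟩, ?_⟩
  · -- regularity of the language itself
    exact AuxS1.IsReg.union (AuxS1.isReg_map someInj hL.reg) (AuxS1.isReg_oneLetter _)
  · -- onto
    intro w hw
    by_cases hfw : w.filterMap id = []
    · refine ⟨[none], Or.inr rfl, ?_⟩
      rw [AuxS1.expandW_singleton]
      exact Relation.EqvGen.symm _ _ (AuxS1.wordEq_canon_none w hw hfw)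
    · obtain ⟨x, hx, hxeq⟩ := hL.onto (w.filterMap id) hfw
      rw [AuxS1.expandW_singleton] at hxeq
      refine ⟨x.map some, Or.inl ⟨x, hx, rfl⟩, ?_⟩
      rw [AuxS1.expandW_singleton]
      exact Relation.EqvGen.trans _ _ _ (AuxS1.wordEq_lift hxeq)
        (Relation.EqvGen.symm _ _ (AuxS1.wordEq_canon_some w hfw))
  · -- multiplication languages
    rintro (_ | a)
    · -- multiplying by the identity letter
      have hsame : {p | ∃ x ∈ ({w | ∃ l ∈ L, w = l.map some} ∪
            {[(none : Option α)]} : Set (List (Option α))),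
          ∃ y ∈ ({w | ∃ l ∈ L, w = l.map some} ∪ {[(none : Option α)]} :
            Set (List (Option α))),
            WordEq (adjoinOne R) (expandW (fun b => [b]) x ++ [none])
              (expandW (fun b => [b]) y) ∧ p = padR x y}
          = {p | ∃ x ∈ ({w | ∃ l ∈ L, w = l.map some} ∪
            {[(none : Option α)]} : Set (List (Option α))),
          ∃ y ∈ ({w | ∃ l ∈ L, w = l.map some} ∪ {[(none : Option α)]} :
            Set (List (Option α))),
            WordEq (adjoinOne R) (expandW (fun b => [b]) x)
              (expandW (fun b => [b]) y) ∧ p = padR x y} := by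
        ext p
        constructor
        · rintro ⟨x, hx, y, hy, heq, rfl⟩
          refine ⟨x, hx, y, hy, ?_, rfl⟩
          refine Relation.EqvGen.trans _ _ _ (Relation.EqvGen.symm _ _ ?_) heq
          rw [AuxS1.expandW_singleton]
          exact AuxS1.wordEq_append_none (hKne x hx)
        · rintro ⟨x, hx, y, hy, heq, rfl⟩
          refine ⟨x, hx, y, hy, ?_, rfl⟩
          refine Relation.EqvGen.trans _ _ _ ?_ heq
          rw [AuxS1.expandW_singleton]
          exact AuxS1.wordEq_append_none (hKne x hx)
      rw [hsame]
      exact hsetreg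
    · -- multiplying by a letter of the original alphabet
      obtain ⟨x₀, hx₀L, hx₀⟩ := hL.onto [a] (by simp)
      rw [AuxS1.expandW_singleton] at hx₀
      have hNchar : ∀ v, (padR x₀ v ∈ {p | ∃ x ∈ L, ∃ y ∈ L,
          WordEq R (expandW (fun a => [a]) x) (expandW (fun a => [a]) y) ∧ p = padR x y})
          ↔ (v ∈ L ∧ WordEq R x₀ v) := by
        intro v
        constructor
        · rintro ⟨x, hx, y, hy, heq, hpad⟩
          obtain ⟨h1, h2⟩ := AuxS1.padR_inj hpad
          subst h1; subst h2
          rw [AuxS1.expandW_singleton, AuxS1.expandW_singleton] at heq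
          exact ⟨hy, heq⟩
        · rintro ⟨hvL, hveq⟩
          exact ⟨x₀, hx₀L, v, hvL, by
            rw [AuxS1.expandW_singleton, AuxS1.expandW_singleton]; exact hveq, rfl⟩
      have hmulset : {p | ∃ x ∈ ({w | ∃ l ∈ L, w = l.map some} ∪
            {[(none : Option α)]} : Set (List (Option α))),
          ∃ y ∈ ({w | ∃ l ∈ L, w = l.map some} ∪ {[(none : Option α)]} :
            Set (List (Option α))),
            WordEq (adjoinOne R) (expandW (fun b => [b]) x ++ [some a])
              (expandW (fun b => [b]) y) ∧ p = padR x y}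
          = {w | ∃ u ∈ {p | ∃ x ∈ L, ∃ y ∈ L,
              WordEq R (expandW (fun a_1 => [a_1]) x ++ [a])
                (expandW (fun a_1 => [a_1]) y) ∧ p = padR x y},
              w = u.map (Prod.map (Option.map (Option.some : α → Option α))
                (Option.map Option.some))}
            ∪ {w | ∃ y ∈ {w | ∃ v ∈ {v | padR x₀ v ∈ {p | ∃ x ∈ L, ∃ y ∈ L,
                WordEq R (expandW (fun a => [a]) x) (expandW (fun a => [a]) y) ∧
                  p = padR x y}}, w = v.map some}, w = padR [none] y} := by
        ext p
        constructor
        · rintro ⟨x, hx, y, hy, heq, rfl⟩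
          rw [AuxS1.expandW_singleton, AuxS1.expandW_singleton] at heq
          have hproj := AuxS1.wordEq_proj heq
          rw [List.filterMap_append] at hproj
          rcases hx with ⟨u, hu, rfl⟩ | rfl
          · rw [AuxS1.filterMap_id_map_some] at hproj
            rcases hy with ⟨v, hv, rfl⟩ | rfl
            · rw [AuxS1.filterMap_id_map_some] at hproj
              refine Or.inl ⟨padR u v, ⟨u, hu, v, hv, ?_, rfl⟩, AuxS1.padR_map _ u v⟩
              rw [AuxS1.expandW_singleton, AuxS1.expandW_singleton]
              simpa using hproj
            · exfalso
              rw [show (([none] : List (Option α)).filterMap id) = [] from rfl] at hproj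
              have := (AuxS1.wordEq_ne hR hproj).mpr rfl
              simp at this
          · rcases hy with ⟨v, hv, rfl⟩ | rfl
            · rw [AuxS1.filterMap_id_map_some] at hproj
              refine Or.inr ⟨v.map some, ⟨v, (hNchar v).mpr ⟨hv, ?_⟩, rfl⟩, rfl⟩
              refine Relation.EqvGen.trans _ _ _ hx₀ ?_
              simpa [WordEq] using hproj
            · exfalso
              rw [show (([none] : List (Option α)).filterMap id) = [] from rfl] at hproj
              have := (AuxS1.wordEq_ne hR hproj).mpr rfl
              simp at this
        · rintro (⟨w', ⟨u, hu, v, hv, heq, rfl⟩, rfl⟩ | ⟨w', ⟨v, hvN, rfl⟩, rfl⟩)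
          · rw [AuxS1.expandW_singleton, AuxS1.expandW_singleton] at heq
            refine ⟨u.map some, Or.inl ⟨u, hu, rfl⟩, v.map some, Or.inl ⟨v, hv, rfl⟩, ?_,
              (AuxS1.padR_map _ u v).symm⟩
            rw [AuxS1.expandW_singleton, AuxS1.expandW_singleton]
            have := AuxS1.wordEq_lift heq
            simpa using this
          · obtain ⟨hvL, hveq⟩ := (hNchar v).mp hvN
            refine ⟨[none], Or.inr rfl, v.map some, Or.inl ⟨v, hvL, rfl⟩, ?_, rfl⟩
            rw [AuxS1.expandW_singleton, AuxS1.expandW_singleton]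
            rw [AuxS1.wordEq_adjoin_iff hR (by simp) (by simpa using hL.ne v hvL)]
            rw [AuxS1.filterMap_id_map_some]
            refine Relation.EqvGen.trans _ _ _ (Relation.EqvGen.symm _ _ ?_) hveq
            simpa [WordEq] using hx₀
      rw [hmulset]
      refine AuxS1.IsReg.union (AuxS1.isReg_map FInj (hL.mul_reg a)) ?_
      exact AuxS1.isReg_padR_image [none]
        (AuxS1.isReg_map someInj (AuxS1.isReg_padR_preimage x₀ hL.eq_reg))
  · -- the prefix language
    have hpreset : {p | ∃ x ∈ ({w | ∃ l ∈ L, w = l.map some} ∪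
          {[(none : Option α)]} : Set (List (Option α))),
        ∃ y : List (Option α), (∃ z ∈ ({w | ∃ l ∈ L, w = l.map some} ∪
          {[(none : Option α)]} : Set (List (Option α))), y <+: z) ∧
          WordEq (adjoinOne R) (expandW (fun b => [b]) x) (expandW (fun b => [b]) y) ∧
            p = padR x y}
        = {w | ∃ u ∈ {p | ∃ x ∈ L, ∃ y : List α, (∃ z ∈ L, y <+: z) ∧
            WordEq R (expandW (fun a => [a]) x) (expandW (fun a => [a]) y) ∧ p = padR x y},
            w = u.map (Prod.map (Option.map (Option.some : α → Option α))
              (Option.map Option.some))}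
          ∪ {[(some none, some none)]} := by
      ext p
      constructor
      · rintro ⟨x, hx, y, ⟨z, hz, hyz⟩, heq, rfl⟩
        rw [AuxS1.expandW_singleton, AuxS1.expandW_singleton] at heq
        have hyne : y ≠ [] := by
          intro h
          subst h
          exact hKne x hx ((AuxS1.wordEq_ne hadj heq).mpr rfl)
        have hproj := AuxS1.wordEq_proj heq
        rcases hz with ⟨l, hl, rfl⟩ | rfl
        · obtain ⟨m, hml, rfl⟩ := AuxS1.prefix_map_some hyz
          rcases hx with ⟨u, hu, rfl⟩ | rfl
          · rw [AuxS1.filterMap_id_map_some, AuxS1.filterMap_id_map_some] at hproj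
            refine Or.inl ⟨padR u m, ⟨u, hu, m, ⟨l, hl, hml⟩, ?_, rfl⟩, AuxS1.padR_map _ u m⟩
            rw [AuxS1.expandW_singleton, AuxS1.expandW_singleton]
            exact hproj
          · exfalso
            rw [AuxS1.filterMap_id_map_some,
              show (([none] : List (Option α)).filterMap id) = [] from rfl] at hproj
            have : m = [] := (AuxS1.wordEq_ne hR hproj).mp rfl
            subst this
            exact hyne rfl
        · rcases AuxS1.prefix_single hyz with rfl | rfl
          · exact absurd rfl hyne
          · rcases hx with ⟨u, hu, rfl⟩ | rfl
            · exfalso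
              rw [AuxS1.filterMap_id_map_some,
                show (([none] : List (Option α)).filterMap id) = [] from rfl] at hproj
              exact hL.ne u hu ((AuxS1.wordEq_ne hR hproj).mpr rfl)
            · exact Or.inr AuxS1.padR_none_none
      · rintro (⟨w', ⟨u, hu, m, ⟨l, hl, hml⟩, heq, rfl⟩, rfl⟩ | rfl)
        · rw [AuxS1.expandW_singleton, AuxS1.expandW_singleton] at heq
          refine ⟨u.map some, Or.inl ⟨u, hu, rfl⟩, m.map some,
            ⟨l.map some, Or.inl ⟨l, hl, rfl⟩, List.IsPrefix.map some hml⟩, ?_,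
            (AuxS1.padR_map _ u m).symm⟩
          rw [AuxS1.expandW_singleton, AuxS1.expandW_singleton]
          exact AuxS1.wordEq_lift heq
        · exact ⟨[none], Or.inr rfl, [none], ⟨[none], Or.inr rfl, List.prefix_refl _⟩,
            Relation.EqvGen.refl _, AuxS1.padR_none_none.symm⟩
    rw [hpreset]
    exact AuxS1.IsReg.union (AuxS1.isReg_map FInj hL.pre_reg) (AuxS1.isReg_oneLetter _)
end

section
/- Let S = sgp^+⟨a, b | aba = ba⟩ with a ≠ b. Then S is not automatic. -/
/-! ### Auxiliary machinery for the proof of Statement 16 -/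

namespace S16

open List Relation

section WordEqBasics

variable {α : Type} {R : Set (List α × List α)}

lemma oneStep_append_right {x y : List α} (w : List α) (h : OneStep R x y) :
    OneStep R (x ++ w) (y ++ w) := by
  obtain ⟨p, u, v, s, hR, rfl, rfl⟩ := h
  exact ⟨p, u, v, s ++ w, hR, by simp, by simp⟩

lemma oneStep_append_left {x y : List α} (w : List α) (h : OneStep R x y) :
    OneStep R (w ++ x) (w ++ y) := by
  obtain ⟨p, u, v, s, hR, rfl, rfl⟩ := h
  exact ⟨w ++ p, u, v, s, hR, by simp, by simp⟩

lemma wordEq_append_right {x y : List α} (w : List α) (h : WordEq R x y) :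
    WordEq R (x ++ w) (y ++ w) := by
  have h' : Relation.EqvGen (OneStep R) x y := h
  clear h
  induction h' with
  | rel u v h => exact EqvGen.rel _ _ (oneStep_append_right w h)
  | refl u => exact EqvGen.refl _
  | symm u v h ih => exact EqvGen.symm _ _ ih
  | trans u v z h₁ h₂ ih₁ ih₂ => exact EqvGen.trans _ _ _ ih₁ ih₂

lemma wordEq_append_left {x y : List α} (w : List α) (h : WordEq R x y) :
    WordEq R (w ++ x) (w ++ y) := by
  have h' : Relation.EqvGen (OneStep R) x y := h
  clear h
  induction h' with
  | rel u v h => exact EqvGen.rel _ _ (oneStep_append_left w h)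
  | refl u => exact EqvGen.refl _
  | symm u v h ih => exact EqvGen.symm _ _ ih
  | trans u v z h₁ h₂ ih₁ ih₂ => exact EqvGen.trans _ _ _ ih₁ ih₂

lemma wordEq_symm {x y : List α} (h : WordEq R x y) : WordEq R y x :=
  EqvGen.symm _ _ h

lemma wordEq_trans {x y z : List α} (h₁ : WordEq R x y) (h₂ : WordEq R y z) :
    WordEq R x z := EqvGen.trans _ _ _ h₁ h₂

end WordEqBasics

section RabSec

variable {α : Type} {a b : α}

/-- The single relation set `{aba = ba}`. -/
local notation "Rab" => ({([a, b, a], [b, a])} : Set (List α × List α))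

lemma mem_Rab {u v : List α} (h : (u, v) ∈ Rab) : u = [a, b, a] ∧ v = [b, a] := by
  have := Set.mem_singleton_iff.mp h
  exact ⟨congrArg Prod.fst this, congrArg Prod.snd this⟩

lemma count_oneStep [DecidableEq α] (hab : a ≠ b) {x y : List α}
    (h : OneStep Rab x y) : x.count b = y.count b := by
  obtain ⟨p, u, v, s, hR, rfl, rfl⟩ := h
  obtain ⟨rfl, rfl⟩ := mem_Rab hR
  simp [List.count_append, List.count_cons, hab]

lemma count_wordEq [DecidableEq α] (hab : a ≠ b) {x y : List α}
    (h : WordEq Rab x y) : x.count b = y.count b := by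
  have h' : Relation.EqvGen (OneStep Rab) x y := h
  clear h
  induction h' with
  | rel u v h => exact count_oneStep hab h
  | refl u => rfl
  | symm u v h ih => exact ih.symm
  | trans u v z h₁ h₂ ih₁ ih₂ => exact ih₁.trans ih₂

/-- `w` has a factor `ba`. -/
def HasBA (a b : α) (w : List α) : Prop := ∃ p s, w = p ++ b :: a :: s

lemma wordEq_cases {x y : List α} (h : WordEq Rab x y) :
    x = y ∨ (HasBA a b x ∧ HasBA a b y) := by
  have h' : Relation.EqvGen (OneStep Rab) x y := h
  clear h
  induction h' with
  | rel u v h =>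
    obtain ⟨p, u', v', s, hR, rfl, rfl⟩ := h
    obtain ⟨rfl, rfl⟩ := mem_Rab hR
    right
    exact ⟨⟨p ++ [a], s, by simp⟩, ⟨p, s, by simp⟩⟩
  | refl u => exact Or.inl rfl
  | symm u v h ih =>
    rcases ih with h1 | ⟨h1, h2⟩
    · exact Or.inl h1.symm
    · exact Or.inr ⟨h2, h1⟩
  | trans u v z h₁ h₂ ih₁ ih₂ =>
    rcases ih₁ with h1 | ⟨hu, hv⟩
    · rcases ih₂ with h2 | ⟨hv', hz⟩
      · exact Or.inl (h1.trans h2)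
      · exact Or.inr ⟨h1 ▸ hv', hz⟩
    · rcases ih₂ with h2 | ⟨_, hz⟩
      · exact Or.inr ⟨hu, h2 ▸ hv⟩
      · exact Or.inr ⟨hu, hz⟩

lemma wordEq_eq_of_noBA {x y : List α} (h : WordEq Rab x y)
    (hx : ¬ HasBA a b x) : x = y :=
  (wordEq_cases h).resolve_right fun h' => hx h'.1

lemma not_hasBA_single : ¬ HasBA a b [a] := by
  rintro ⟨p, s, h⟩
  have := congrArg List.length h
  simp at this
  omega

lemma not_hasBA_power (hab : a ≠ b) :
    ∀ q r : ℕ, ¬ HasBA a b (List.replicate q a ++ List.replicate r b) := by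
  intro q
  induction q with
  | zero =>
    rintro r ⟨p, s, h⟩
    have ha : a ∈ List.replicate r b := by
      rw [List.replicate_zero, List.nil_append] at h
      rw [h]
      simp
    exact hab (List.eq_of_mem_replicate ha)
  | succ q ih =>
    rintro r ⟨p, s, h⟩
    rw [List.replicate_succ, List.cons_append] at h
    cases p with
    | nil =>
      simp only [List.nil_append] at h
      exact hab (List.cons_eq_cons.mp h).1
    | cons hd p' =>
      rw [List.cons_append] at h
      obtain ⟨-, h2⟩ := List.cons_eq_cons.mp h
      exact ih r ⟨p', s, h2⟩

/-- Derivation: `a bⁿ a = bⁿ a` for `n ≥ 1`. -/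
lemma deriv_aba (r : ℕ) (hr : 1 ≤ r) :
    WordEq Rab (a :: (List.replicate r b ++ [a])) (List.replicate r b ++ [a]) := by
  induction r, hr using Nat.le_induction with
  | base =>
    refine EqvGen.rel _ _ ⟨[], [a, b, a], [b, a], [], rfl, by simp, by simp⟩
  | succ r hr ih =>
    have e0 : a :: (List.replicate (r + 1) b ++ [a])
        = (a :: List.replicate r b) ++ [b, a] := by
      simp [List.replicate_succ' (n := r)]
    have e1 : (a :: List.replicate r b) ++ [a, b, a]
        = (a :: (List.replicate r b ++ [a])) ++ [b, a] := by simp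
    have s1 : WordEq Rab ((a :: List.replicate r b) ++ [b, a])
        ((a :: List.replicate r b) ++ [a, b, a]) :=
      EqvGen.symm _ _ (EqvGen.rel _ _
        ⟨a :: List.replicate r b, [a, b, a], [b, a], [], rfl, by simp, by simp⟩)
    have s2 : WordEq Rab ((a :: (List.replicate r b ++ [a])) ++ [b, a])
        ((List.replicate r b ++ [a]) ++ [b, a]) := wordEq_append_right _ ih
    have s3 : WordEq Rab ((List.replicate r b ++ [a]) ++ [b, a])
        (List.replicate r b ++ [b, a]) := by
      refine EqvGen.rel _ _ ⟨List.replicate r b, [a, b, a], [b, a], [], rfl, by simp, by simp⟩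
    have e2 : List.replicate r b ++ [b, a] = List.replicate (r + 1) b ++ [a] := by
      simp [List.replicate_succ' (n := r)]
    rw [e0]
    refine wordEq_trans s1 ?_
    rw [e1]
    refine wordEq_trans s2 ?_
    refine wordEq_trans s3 ?_
    rw [e2]
    exact EqvGen.refl _

/-- Derivation: `a^q bʳ a = bʳ a` for `r ≥ 1`. -/
lemma deriv_power (r : ℕ) (hr : 1 ≤ r) :
    ∀ q : ℕ, WordEq Rab (List.replicate q a ++ List.replicate r b ++ [a])
      (List.replicate r b ++ [a]) := by
  intro q
  induction q with
  | zero => simpa using (show WordEq Rab (List.replicate r b ++ [a]) (List.replicate r b ++ [a]) from EqvGen.refl _)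
  | succ q ih =>
    have e0 : List.replicate (q + 1) a ++ List.replicate r b ++ [a]
        = [a] ++ (List.replicate q a ++ List.replicate r b ++ [a]) := by
      simp [List.replicate_succ]
    rw [e0]
    refine wordEq_trans (wordEq_append_left [a] ih) ?_
    simpa using deriv_aba (a := a) (b := b) r hr

end RabSec

section ExpandLemmas

variable {α β : Type} {g : β → List α}

lemma expandW_nil : expandW g ([] : List β) = [] := rfl

lemma expandW_cons (c : β) (x : List β) :
    expandW g (c :: x) = g c ++ expandW g x := by simp [expandW]

lemma expandW_append (x y : List β) :
    expandW g (x ++ y) = expandW g x ++ expandW g y := by simp [expandW]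

lemma length_expandW_le {ℓ : ℕ} (hg : ∀ c, (g c).length ≤ ℓ) (x : List β) :
    (expandW g x).length ≤ ℓ * x.length := by
  induction x with
  | nil => simp [expandW]
  | cons c x ih =>
    rw [expandW_cons]
    simp only [List.length_append, List.length_cons]
    calc (g c).length + (expandW g x).length ≤ ℓ + ℓ * x.length := by
          exact Nat.add_le_add (hg c) ih
      _ = ℓ * (x.length + 1) := by ring

lemma count_expandW [DecidableEq α] (b : α) (x : List β) :
    (expandW g x).count b = (x.map fun c => (g c).count b).sum := by
  induction x with
  | nil => simp [expandW]
  | cons c x ih => rw [expandW_cons]; simp [List.count_append, ih]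

lemma expandW_take_prefix (x : List β) (t : ℕ) :
    expandW g (x.take t) <+: expandW g x :=
  ⟨expandW g (x.drop t), by rw [← expandW_append, List.take_append_drop]⟩

lemma expandW_eq_nil (hg : ∀ c, g c ≠ []) {x : List β} (h : expandW g x = []) :
    x = [] := by
  cases x with
  | nil => rfl
  | cons c x =>
    rw [expandW_cons] at h
    exact absurd (List.append_eq_nil_iff.mp h).1 (hg c)

lemma expandW_eq_singleton (hg : ∀ c, g c ≠ []) {x : List β} {a : α}
    (h : expandW g x = [a]) : ∃ c, x = [c] ∧ g c = [a] := by
  cases x with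
  | nil => simp [expandW] at h
  | cons c x =>
    rw [expandW_cons] at h
    cases hgc : g c with
    | nil => exact absurd hgc (hg c)
    | cons hd tl =>
      rw [hgc, List.cons_append] at h
      obtain ⟨h1, h2⟩ := List.cons_eq_cons.mp h
      obtain ⟨h3, h4⟩ := List.append_eq_nil_iff.mp h2
      refine ⟨c, ?_, ?_⟩
      · rw [expandW_eq_nil hg h4]
      · rw [hgc, h1, h3]

end ExpandLemmas

section ZipSum

variable {γ δ' : Type*}

lemma take_zip : ∀ (n : ℕ) (A : List γ) (B : List δ'),
    (A.zip B).take n = (A.take n).zip (B.take n) := by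
  intro n
  induction n with
  | zero => simp
  | succ n ih =>
    intro A B
    cases A with
    | nil => simp
    | cons a A =>
      cases B with
      | nil => simp
      | cons b B => simp [List.zip_cons_cons, ih]

lemma sum_zip_sub (f : γ → ℤ) (f' : δ' → ℤ) :
    ∀ (A : List γ) (B : List δ'), A.length = B.length →
      ((A.zip B).map fun p => f p.1 - f' p.2).sum
        = (A.map f).sum - (B.map f').sum := by
  intro A
  induction A with
  | nil =>
    intro B hB
    have : B = [] := List.length_eq_zero_iff.mp hB.symm
    simp [this]
  | cons a A ih =>
    intro B hB
    cases B with
    | nil => simp at hB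
    | cons b B =>
      simp only [List.length_cons, Nat.add_right_cancel_iff] at hB
      simp only [List.zip_cons_cons, List.map_cons, List.sum_cons, ih B hB]
      ring

lemma sum_map_neg (f : γ → ℤ) (l : List γ) :
    (l.map fun c => -f c).sum = -(l.map f).sum := by
  induction l with
  | nil => simp
  | cons c l ih => simp [ih]; ring

lemma cast_sum_map (f : γ → ℕ) (l : List γ) :
    (l.map fun c => (f c : ℤ)).sum = ((l.map f).sum : ℤ) := by
  induction l with
  | nil => simp
  | cons c l ih => simp [ih]

end ZipSum

section Core

/-- Key DFA lemma: if every accepted word has zero total `δ`-weight, then the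
`δ`-weight of every prefix of an accepted word is at most `(card σ) * ℓ`. -/
lemma core {γ σ : Type} [Fintype σ] (M : DFA γ σ) (δ : γ → ℤ) (ℓ : ℕ)
    (hδ : ∀ c, δ c ≤ (ℓ : ℤ))
    (hzero : ∀ w ∈ M.accepts, (w.map δ).sum = 0) :
    ∀ w ∈ M.accepts, ∀ t, ((w.take t).map δ).sum ≤ (Fintype.card σ : ℤ) * ℓ := by
  classical
  intro w hw t
  set N := Fintype.card σ with hN
  by_contra hS
  push_neg at hS
  -- prefix sums
  set S : ℕ → ℤ := fun i => ((w.take i).map δ).sum with hSdef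
  have hS0 : S 0 = 0 := by simp [hSdef]
  have hNl0 : (0 : ℤ) ≤ (N : ℤ) * ℓ := by positivity
  have ht : t ≤ w.length := by
    by_contra h
    push_neg at h
    rw [List.take_of_length_le (le_of_lt h)] at hS
    rw [hzero w hw] at hS
    exact absurd hNl0 (not_le.mpr hS)
  have hstep : ∀ i (hi : i < w.length), S (i + 1) = S i + δ (w[i]'hi) := by
    intro i hi
    have : w.take (i + 1) = w.take i ++ [w[i]] := by
      rw [List.take_succ, List.getElem?_eq_getElem hi]
      rfl
    simp only [hSdef]
    rw [this, List.map_append, List.sum_append]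
    simp
  -- the crossing indices
  have hex : ∀ k : Fin (N + 1), ∃ i, i ≤ t ∧ (k : ℤ) * ℓ < S i := by
    intro k
    refine ⟨t, le_refl _, lt_of_le_of_lt ?_ hS⟩
    have : (k : ℤ) ≤ (N : ℤ) := by exact_mod_cast Nat.lt_succ_iff.mp k.isLt
    exact mul_le_mul_of_nonneg_right this (by positivity)
  set I : Fin (N + 1) → ℕ := fun k => Nat.find (hex k) with hIdef
  have hIspec : ∀ k, I k ≤ t ∧ (k : ℤ) * ℓ < S (I k) := fun k => Nat.find_spec (hex k)
  have hImin : ∀ k, ∀ i < I k, ¬(i ≤ t ∧ (k : ℤ) * ℓ < S i) :=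
    fun k i hi => Nat.find_min (hex k) hi
  have hIpos : ∀ k, 0 < I k := by
    intro k
    rcases Nat.eq_zero_or_pos (I k) with h | h
    swap
    · exact h
    · exfalso
      have := (hIspec k).2
      rw [h, hS0] at this
      have : (0:ℤ) ≤ (k : ℤ) * ℓ := by positivity
      omega
  have hIup : ∀ k, S (I k) ≤ (k : ℤ) * ℓ + ℓ := by
    intro k
    have h1 : I k - 1 < I k := by have := hIpos k; omega
    have h2 : I k - 1 ≤ t := le_trans (le_of_lt h1) (hIspec k).1
    have h3 : ¬((I k - 1) ≤ t ∧ (k : ℤ) * ℓ < S (I k - 1)) := hImin k _ h1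
    have h4 : S (I k - 1) ≤ (k : ℤ) * ℓ := by
      by_contra h
      exact h3 ⟨h2, by omega⟩
    have h5 : I k - 1 < w.length := by
      have := (hIspec k).1
      have := hIpos k
      omega
    have h6 : S (I k) = S (I k - 1) + δ w[I k - 1] := by
      have heq : I k = (I k - 1) + 1 := by have := hIpos k; omega
      conv_lhs => rw [heq]
      exact hstep _ h5
    have := hδ w[I k - 1]
    omega
  -- two indices with the same state and different prefix sums
  set st : ℕ → σ := fun i => M.evalFrom M.start (w.take i) with hstdef
  obtain ⟨k, k', hkk', hfeq⟩ :=
    Fintype.exists_ne_map_eq_of_card_lt (fun k : Fin (N + 1) => st (I k))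
      (by simp [hN])
  -- WLOG k < k'
  have key : ∀ k k' : Fin (N + 1), (k : ℕ) < (k' : ℕ) → S (I k) < S (I k') := by
    intro k k' hlt
    calc S (I k) ≤ (k : ℤ) * ℓ + ℓ := hIup k
      _ = ((k : ℤ) + 1) * ℓ := by ring
      _ ≤ (k' : ℤ) * ℓ := by
          have h1 : ((k : ℤ) + 1) ≤ (k' : ℤ) := by exact_mod_cast hlt
          exact mul_le_mul_of_nonneg_right h1 (by positivity)
      _ < S (I k') := (hIspec k').2
  have hSne : S (I k) ≠ S (I k') := by
    rcases lt_or_gt_of_ne (fun h : (k : ℕ) = (k' : ℕ) => hkk' (Fin.ext h)) with h | h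
    · exact ne_of_lt (key _ _ h)
    · exact ne_of_gt (key _ _ h)
  -- excision
  obtain ⟨i, j, hij, hjt, hstate, hSij⟩ :
      ∃ i j, i ≤ j ∧ j ≤ t ∧ st i = st j ∧ S i ≠ S j := by
    rcases le_total (I k) (I k') with h | h
    · exact ⟨I k, I k', h, (hIspec k').1, hfeq, hSne⟩
    · exact ⟨I k', I k, h, (hIspec k).1, hfeq.symm, hSne.symm⟩
  have hjw : j ≤ w.length := le_trans hjt ht
  have hacc : (w.take i ++ w.drop j) ∈ M.accepts := by
    rw [DFA.mem_accepts] at hw ⊢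
    have h1 : M.eval (w.take i ++ w.drop j) = M.evalFrom (st i) (w.drop j) :=
      M.evalFrom_of_append M.start _ _
    have h2 : M.eval w = M.evalFrom (st j) (w.drop j) := by
      conv_lhs => rw [← List.take_append_drop j w]
      exact M.evalFrom_of_append M.start _ _
    rw [h1, hstate, ← h2]
    exact hw
  have htotal : S j + ((w.drop j).map δ).sum = 0 := by
    have h0 := hzero w hw
    conv_lhs at h0 => rw [← List.take_append_drop j w]
    simpa [hSdef] using h0
  have htotal' : S i + ((w.drop j).map δ).sum = 0 := by
    have h0 := hzero _ hacc
    simpa [hSdef] using h0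
  exact hSij (by omega)

end Core

end S16
namespace S16

open List

lemma count_prefix_zero {α : Type} [DecidableEq α] {a b : α} (hab : a ≠ b)
    {u : List α} {q r : ℕ}
    (h : u <+: (List.replicate q a ++ List.replicate r b)) (hlen : u.length ≤ q) :
    u.count b = 0 := by
  obtain ⟨tl, htl⟩ := h
  have hu : u = (List.replicate q a ++ List.replicate r b).take u.length := by
    rw [← htl, List.take_left]
  rw [hu, List.take_append, List.take_replicate, List.count_append]
  have h1 : u.length - (List.replicate q a).length = 0 := by
    simp [Nat.sub_eq_zero_of_le, hlen]
  rw [h1, List.take_zero, List.count_nil, List.count_replicate,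
    if_neg (by simp [hab])]

lemma padR_sum {β : Type} (wt : Option β → ℕ) (h0 : wt none = 0) (x y : List β) :
    ((padR x y).map fun p => (wt p.1 : ℤ) - (wt p.2 : ℤ)).sum
      = ((x.map fun c => wt (some c)).sum : ℤ)
        - ((y.map fun c => wt (some c)).sum : ℤ) := by
  have hx : ∀ (z : List β) (k : ℕ),
      ((z.map some ++ List.replicate k (none : Option β)).map
        fun o => (wt o : ℤ)).sum = ((z.map fun c => wt (some c)).sum : ℤ) := by
    intro z k
    induction z with
    | nil => simp [h0]
    | cons c z ih =>
      simp only [List.map_cons, List.cons_append, List.sum_cons, ih]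
      push_cast
      ring
  rw [padR, sum_zip_sub (fun o => (wt o : ℤ)) (fun o => (wt o : ℤ)) _ _ (by simp; omega),
    hx, hx]

end S16
/-- the semigroup `S = sgp⁺⟨a, b ∣ aba = ba⟩` is not
automatic. -/
theorem statement_16 {α : Type} [Fintype α] (a b : α) (hab : a ≠ b)
    (hA : ∀ x : α, x = a ∨ x = b)
    (R : Set (List α × List α)) (hRdef : R = {([a, b, a], [b, a])}) :
    ¬ SgpAutomatic R := by
  classical
  subst hRdef
  rintro ⟨β, hβ, g, L, hS⟩
  letI := hβ
  -- a generator `c₀` whose value is the letter `a`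
  obtain ⟨x₀, hx₀L, hx₀⟩ := hS.onto [a] (by simp)
  have hx₀e : [a] = expandW g x₀ :=
    S16.wordEq_eq_of_noBA (S16.wordEq_symm hx₀) S16.not_hasBA_single
  obtain ⟨c₀, -, hc₀⟩ := S16.expandW_eq_singleton hS.gen_ne hx₀e.symm
  -- the DFA accepting `L_a`
  obtain ⟨σ, instσ, M, hM⟩ := hS.mul_reg c₀
  letI := instσ
  set ℓ : ℕ := max 1 (Finset.univ.sup fun c : β => (g c).length) with hℓdef
  have hℓ1 : 1 ≤ ℓ := le_max_left _ _
  have hgl : ∀ c, (g c).length ≤ ℓ :=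
    fun c => le_max_of_le_right (Finset.le_sup (f := fun c => (g c).length) (Finset.mem_univ c))
  set N : ℕ := Fintype.card σ with hN
  set r : ℕ := N * ℓ + 1 with hr
  have hr1 : 1 ≤ r := by omega
  -- weights: the number of `b`'s a padded letter expands to
  set wt : Option β → ℕ := fun o => o.elim 0 (fun c => (g c).count b) with hwt
  set dlt : Option β × Option β → ℤ := fun p => (wt p.1 : ℤ) - (wt p.2 : ℤ) with hdlt
  have hwt_le : ∀ o, wt o ≤ ℓ := by
    rintro (_ | c)
    · simp [hwt]
    · simpa [hwt] using le_trans (List.count_le_length) (hgl c)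
  have hmem : ∀ p, p ∈ M.accepts ↔ ∃ x ∈ L, ∃ y ∈ L,
      WordEq {([a, b, a], [b, a])} (expandW g x ++ g c₀) (expandW g y) ∧
        p = padR x y := by
    intro p; rw [hM]; exact Iff.rfl
  -- every accepted word has zero total weight (b-count is invariant)
  have hzero : ∀ w ∈ M.accepts, (w.map dlt).sum = 0 := by
    intro w hw
    obtain ⟨x, hxL, y, hyL, heq, rfl⟩ := (hmem w).mp hw
    have hcnt : (expandW g x).count b = (expandW g y).count b := by
      have h1 := S16.count_wordEq hab heq
      rw [List.count_append, hc₀] at h1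
      simpa [List.count_cons, hab.symm, hab] using h1
    rw [hdlt, S16.padR_sum wt (by simp [hwt]) x y]
    have cx : ((x.map fun c => wt (some c)).sum) = (expandW g x).count b := by
      rw [S16.count_expandW b x]; simp [hwt]
    have cy : ((y.map fun c => wt (some c)).sum) = (expandW g y).count b := by
      rw [S16.count_expandW b y]; simp [hwt]
    rw [cx, cy, hcnt]
    ring
  have hbound : ∀ p, (fun p => -dlt p) p ≤ (ℓ : ℤ) := by
    intro p
    have h1 := hwt_le p.1
    have h2 := hwt_le p.2
    simp only [hdlt]
    omega
  have hzero' : ∀ w ∈ M.accepts, (w.map fun p => -dlt p).sum = 0 := by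
    intro w hw
    rw [S16.sum_map_neg, hzero w hw]
    ring
  -- the representative of `bʳa`
  obtain ⟨y, hyL, hy⟩ := hS.onto (List.replicate r b ++ [a]) (by simp)
  have hycnt : (expandW g y).count b = r := by
    have h1 := S16.count_wordEq hab hy
    rw [List.count_append, List.count_replicate] at h1
    simpa [List.count_cons, hab.symm, hab] using h1
  set m : ℕ := y.length with hm
  set q : ℕ := ℓ * (m + 2) with hq
  have hq1 : 1 ≤ q := by
    rw [hq]
    exact le_trans hℓ1 (Nat.le_mul_of_pos_right ℓ (by omega))
  -- the representative of `a^q bʳ`, necessarily literal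
  obtain ⟨x, hxL, hx⟩ := hS.onto (List.replicate q a ++ List.replicate r b) (by
    intro h
    have := congrArg List.length h
    rw [List.length_append, List.length_replicate, List.length_replicate,
      List.length_nil] at this
    omega)
  have hxe : List.replicate q a ++ List.replicate r b = expandW g x :=
    S16.wordEq_eq_of_noBA (S16.wordEq_symm hx) (S16.not_hasBA_power hab q r)
  have hxlen : m + 2 ≤ x.length := by
    have h1 : (expandW g x).length ≤ ℓ * x.length := S16.length_expandW_le hgl x
    have h2 : (expandW g x).length = q + r := by rw [← hxe]; simp
    have h3 : q < ℓ * x.length := by omega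
    rw [hq] at h3
    exact le_of_lt (Nat.lt_of_mul_lt_mul_left h3)
  -- the pair `(x, y)` lies in `L_a`
  have hpair : padR x y ∈ M.accepts := by
    rw [hmem]
    refine ⟨x, hxL, y, hyL, ?_, rfl⟩
    rw [hc₀, ← hxe]
    exact S16.wordEq_trans (S16.deriv_power r hr1 q) (S16.wordEq_symm hy)
  -- compute the prefix weight at position m+1
  have hpadR : padR x y
      = (x.map some).zip (y.map some ++ List.replicate (x.length - m) none) := by
    rw [padR, show y.length - x.length = 0 from by omega]
    simp [hm]
  have hB : (y.map some ++ List.replicate (x.length - m) (none : Option β)).take (m + 1)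
      = y.map some ++ [none] := by
    rw [List.take_append, List.take_of_length_le (by simp [hm]),
      List.take_replicate]
    have h1 : m + 1 - (y.map some).length = 1 := by simp [hm]
    rw [h1, show min 1 (x.length - m) = 1 from by omega]
    rfl
  have htk : (padR x y).take (m + 1)
      = ((x.take (m + 1)).map some).zip (y.map some ++ [none]) := by
    rw [hpadR, S16.take_zip, hB, List.map_take]
  have hlenAB : ((x.take (m + 1)).map some).length = (y.map some ++ [none]).length := by
    simp [hm]
    omega
  -- the expansion of the first m+1 letters of x is a short prefix of a^q bʳ
  have hA0 : (expandW g (x.take (m + 1))).count b = 0 := by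
    refine S16.count_prefix_zero hab (q := q) (r := r) ?_ ?_
    · rw [hxe]; exact S16.expandW_take_prefix x (m + 1)
    · have h1 := S16.length_expandW_le hgl (x.take (m + 1))
      have h2 : (x.take (m + 1)).length ≤ m + 1 := by simp
      calc (expandW g (x.take (m + 1))).length ≤ ℓ * (x.take (m + 1)).length := h1
        _ ≤ ℓ * (m + 1) := Nat.mul_le_mul_left ℓ h2
        _ ≤ ℓ * (m + 2) := Nat.mul_le_mul_left ℓ (by omega)
        _ = q := by rw [hq]
  have htake : (((padR x y).take (m + 1)).map dlt).sum = -(r : ℤ) := by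
    rw [htk, hdlt]
    refine (S16.sum_zip_sub (fun o : Option β => (wt o : ℤ))
      (fun o : Option β => (wt o : ℤ)) _ _ hlenAB).trans ?_
    have c1 : (((x.take (m + 1)).map some).map fun o => (wt o : ℤ)).sum = 0 := by
      rw [List.map_map]
      have : ((x.take (m + 1)).map ((fun o => (wt o : ℤ)) ∘ some)).sum
          = (((x.take (m + 1)).map fun c => wt (some c)).sum : ℤ) := by
        exact S16.cast_sum_map (fun c => wt (some c)) _
      rw [this]
      have : ((x.take (m + 1)).map fun c => wt (some c)).sum
          = (expandW g (x.take (m + 1))).count b := by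
        rw [S16.count_expandW b]; simp [hwt]
      rw [this, hA0]
      rfl
    have c2 : ((y.map some ++ [none]).map fun o => (wt o : ℤ)).sum = (r : ℤ) := by
      rw [List.map_append, List.sum_append, List.map_map]
      have : ((y.map ((fun o => (wt o : ℤ)) ∘ some)).sum)
          = ((y.map fun c => wt (some c)).sum : ℤ) := by
        exact S16.cast_sum_map (fun c => wt (some c)) _
      rw [this]
      have : (y.map fun c => wt (some c)).sum = (expandW g y).count b := by
        rw [S16.count_expandW b]; simp [hwt]
      rw [this, hycnt]
      simp [hwt]
    rw [c1, c2]
    ring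
  -- contradiction with the core lemma
  have hfin := S16.core M (fun p => -dlt p) ℓ hbound hzero' (padR x y) hpair (m + 1)
  have hneg : (((padR x y).take (m + 1)).map fun p => -dlt p).sum = (r : ℤ) := by
    rw [S16.sum_map_neg, htake]
    ring
  rw [hneg] at hfin
  have hcast : ((r : ℕ) : ℤ) = (N : ℤ) * (ℓ : ℤ) + 1 := by
    rw [hr]; push_cast; ring
  rw [← hN] at hfin
  linarith
end
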